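/- (Key Loewner-order lemma.) Let A₁, …, A_ℓ be n×n real symmetric matrices with Gram matrix B_{ij} = ⟨A_i, A_j⟩_F. Let q₁, …, q_m ∈ ℝ^n be orthonormal vectors, let μ₁ ≤ … ≤ μ_m and λ*₁ ≤ … ≤ λ*_m be real numbers, set r_k = μ_k − λ*_k, let J ∈ ℝ^{m×ℓ} have entries J_{kj} = q_kᵀ A_j q_k, and define H = Jᵀ J + Σ_{k=1}^m r_k H^{(k)} where (H^{(k)})_{ij} = 2 Σ_{t=1, μ_t ≠ μ_k}^m (q_tᵀ A_i q_k)(q_tᵀ A_j q_k)/(μ_k − μ_t). Then B − H is positive semidefinite, i.e., vᵀ H v ≤ vᵀ B v for all v ∈ ℝ^ℓ. -/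

import Mathlib

open Matrix

private lemma sum3 {α β γ : Type*} (s : Finset α) (t : Finset β) (u : Finset γ)
    (f : α → β → γ → ℝ) :
    ∑ a ∈ s, ∑ b ∈ t, ∑ j ∈ u, f a b j = ∑ j ∈ u, ∑ a ∈ s, ∑ b ∈ t, f a b j :=
  Eq.trans (Finset.sum_congr rfl fun _ _ => Finset.sum_comm) Finset.sum_comm

private lemma quad {p : ℕ} (N : Matrix (Fin p) (Fin p) ℝ) (v : Fin p → ℝ) :
    v ⬝ᵥ N *ᵥ v = ∑ i, ∑ j, v i * N i j * v j := by
  simp only [dotProduct, mulVec, Finset.mul_sum]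
  exact Finset.sum_congr rfl fun i _ => Finset.sum_congr rfl fun j _ => by ring

private lemma bessel {n m : ℕ} (q : Fin m → Fin n → ℝ)
    (hq : ∀ i j, q i ⬝ᵥ q j = if i = j then (1:ℝ) else 0)
    (y : Fin n → ℝ) : ∑ t, (q t ⬝ᵥ y)^2 ≤ y ⬝ᵥ y := by
  set s : Fin n → ℝ := ∑ t, (q t ⬝ᵥ y) • q t with hs
  have h0 : (0:ℝ) ≤ (y - s) ⬝ᵥ (y - s) := by
    simp only [dotProduct]
    exact Finset.sum_nonneg fun i _ => mul_self_nonneg _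
  have key : ∀ z : Fin n → ℝ, s ⬝ᵥ z = ∑ t, (q t ⬝ᵥ y) * (q t ⬝ᵥ z) := by
    intro z
    simp only [hs, dotProduct, Finset.sum_apply, Pi.smul_apply, smul_eq_mul,
      Finset.sum_mul, Finset.mul_sum]
    rw [Finset.sum_comm]
    refine Finset.sum_congr rfl fun t _ => Finset.sum_congr rfl fun a _ =>
      Finset.sum_congr rfl fun b _ => by ring
  have hsy : s ⬝ᵥ y = ∑ t, (q t ⬝ᵥ y)^2 := by rw [key]; simp [sq]
  have hys : y ⬝ᵥ s = ∑ t, (q t ⬝ᵥ y)^2 := by rw [dotProduct_comm]; exact hsy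
  have hss : s ⬝ᵥ s = ∑ t, (q t ⬝ᵥ y)^2 := by
    rw [key]
    have h2 : ∀ t : Fin m, q t ⬝ᵥ s = q t ⬝ᵥ y := by
      intro t
      rw [dotProduct_comm, key]
      simp [hq, dotProduct_comm]
    simp only [h2, sq]
  have expand : (y - s) ⬝ᵥ (y - s) = y ⬝ᵥ y - ∑ t, (q t ⬝ᵥ y)^2 := by
    rw [sub_dotProduct, dotProduct_sub, dotProduct_sub, hsy, hys, hss]; ring
  linarith

private lemma perpair (a b p s cc : ℝ) (hcc : 0 ≤ cc) (hab : a ≠ b)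
    (hmono : 0 ≤ (a - b) * (p - s)) :
    2*(a-p)*cc/(a-b) + 2*(b-s)*cc/(b-a) ≤ 2*cc := by
  rcases hab.lt_or_gt with h | h
  · have hd : a - b < 0 := by linarith
    have hd' : (0:ℝ) < b - a := by linarith
    rw [div_add_div _ _ (ne_of_lt hd) (ne_of_gt hd'), div_le_iff_of_neg (by nlinarith : (a-b)*(b-a) < 0)]
    nlinarith [mul_nonneg hcc hmono]
  · have hd : (0:ℝ) < a - b := by linarith
    have hd' : b - a < 0 := by linarith
    rw [div_add_div _ _ (ne_of_gt hd) (ne_of_lt hd'), div_le_iff_of_neg (by nlinarith : (a-b)*(b-a) < 0)]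
    nlinarith [mul_nonneg hcc hmono]

theorem gram_sub_hessian_posSemidef {n m ℓ : ℕ}
    (A : Fin ℓ → Matrix (Fin n) (Fin n) ℝ) (hA : ∀ i, (A i).IsSymm)
    (B : Matrix (Fin ℓ) (Fin ℓ) ℝ)
    (hB : ∀ i j, B i j = ((A i)ᵀ * A j).trace)
    (q : Fin m → Fin n → ℝ)
    (hq : ∀ i j, q i ⬝ᵥ q j = if i = j then (1 : ℝ) else 0)
    (μ lamStar : Fin m → ℝ) (hμ : Monotone μ) (hlamStar : Monotone lamStar)
    (r : Fin m → ℝ) (hr : ∀ k, r k = μ k - lamStar k)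
    (J : Matrix (Fin m) (Fin ℓ) ℝ)
    (hJ : ∀ k j, J k j = q k ⬝ᵥ (A j) *ᵥ q k)
    (Hk : Fin m → Matrix (Fin ℓ) (Fin ℓ) ℝ)
    (hHk : ∀ k i j, Hk k i j =
      2 * ∑ t ∈ Finset.univ.filter (fun t => μ t ≠ μ k),
        (q t ⬝ᵥ (A i) *ᵥ q k) * (q t ⬝ᵥ (A j) *ᵥ q k) / (μ k - μ t))
    (H : Matrix (Fin ℓ) (Fin ℓ) ℝ)
    (hH : H = Jᵀ * J + ∑ k, r k • Hk k) :
    ∀ v : Fin ℓ → ℝ, v ⬝ᵥ H *ᵥ v ≤ v ⬝ᵥ B *ᵥ v := by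
  intro v
  set M : Matrix (Fin n) (Fin n) ℝ := ∑ j, v j • A j with hMdef
  have hMe : ∀ a b, M a b = ∑ j, v j * A j a b := by
    intro a b; simp [hMdef, Matrix.sum_apply]
  have hMsymm : Mᵀ = M := by
    simp only [hMdef, transpose_sum, transpose_smul]
    exact Finset.sum_congr rfl fun j _ => by rw [(hA j).eq]
  have hlin : ∀ x y : Fin n → ℝ, x ⬝ᵥ M *ᵥ y = ∑ j, v j * (x ⬝ᵥ A j *ᵥ y) := by
    intro x y
    simp only [dotProduct, mulVec, hMe, Finset.sum_mul, Finset.mul_sum]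
    refine Eq.trans (Finset.sum_congr rfl fun a _ => Finset.sum_comm) (Eq.trans Finset.sum_comm ?_)
    exact Finset.sum_congr rfl fun j _ => Finset.sum_congr rfl fun a _ =>
      Finset.sum_congr rfl fun b _ => by ring
  set c : Fin m → Fin m → ℝ := fun t k => q t ⬝ᵥ M *ᵥ q k with hc
  have csymm : ∀ t k, c k t = c t k := by
    intro t k
    simp only [hc]
    rw [dotProduct_mulVec, ← hMsymm, vecMul_transpose, hMsymm, dotProduct_comm]
  -- quadratic form of B
  have hBv : v ⬝ᵥ B *ᵥ v = ∑ a, ∑ b, (M a b)^2 := by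
    have htr : ∀ i j, ((A i)ᵀ * A j).trace = ∑ d, ∑ a, A i a d * A j a d := by
      intro i j
      simp only [Matrix.trace, Matrix.diag, Matrix.mul_apply, Matrix.transpose_apply]
    calc v ⬝ᵥ B *ᵥ v = ∑ i, ∑ j, ∑ d, ∑ a, v i * A i a d * (v j * A j a d) := by
          simp only [dotProduct, mulVec, hB, htr, Finset.mul_sum, Finset.sum_mul]
          exact Finset.sum_congr rfl fun i _ => Finset.sum_congr rfl fun j _ =>
            Finset.sum_congr rfl fun d _ => Finset.sum_congr rfl fun a _ => by ring
      _ = ∑ d, ∑ a, ∑ i, ∑ j, v i * A i a d * (v j * A j a d) := by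
          rw [sum3]
          exact Finset.sum_congr rfl fun d _ => sum3 _ _ _ _
      _ = ∑ a, ∑ d, ∑ i, ∑ j, v i * A i a d * (v j * A j a d) := Finset.sum_comm
      _ = ∑ a, ∑ b, (M a b)^2 := by
          refine Finset.sum_congr rfl fun a _ => Finset.sum_congr rfl fun b _ => ?_
          rw [hMe, sq, Finset.sum_mul_sum]
  -- quadratic form of JᵀJ
  have hJv : v ⬝ᵥ (Jᵀ * J) *ᵥ v = ∑ k, (c k k)^2 := by
    rw [← mulVec_mulVec, dotProduct_mulVec, vecMul_transpose]
    have hJvk : ∀ k, (J *ᵥ v) k = c k k := by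
      intro k
      have e1 : c k k = ∑ j, v j * (q k ⬝ᵥ (A j) *ᵥ q k) := hlin _ _
      rw [e1]
      show ∑ j, J k j * v j = _
      exact Finset.sum_congr rfl fun j _ => by rw [hJ]; ring
    simp only [dotProduct, hJvk, sq]
  -- quadratic form of Hk
  have hHkv : ∀ k, v ⬝ᵥ (Hk k) *ᵥ v
      = ∑ t ∈ Finset.univ.filter (fun t => μ t ≠ μ k), 2 * (c t k)^2 / (μ k - μ t) := by
    intro k
    calc v ⬝ᵥ (Hk k) *ᵥ v
        = ∑ i, ∑ j, ∑ t ∈ Finset.univ.filter (fun t => μ t ≠ μ k),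
            (v i * (q t ⬝ᵥ (A i) *ᵥ q k)) * (v j * (q t ⬝ᵥ (A j) *ᵥ q k)) * (2 / (μ k - μ t)) := by
          rw [quad]
          refine Finset.sum_congr rfl fun i _ => Finset.sum_congr rfl fun j _ => ?_
          rw [hHk, Finset.mul_sum, Finset.mul_sum, Finset.sum_mul]
          exact Finset.sum_congr rfl fun t _ => by ring
      _ = ∑ t ∈ Finset.univ.filter (fun t => μ t ≠ μ k), ∑ i, ∑ j,
            (v i * (q t ⬝ᵥ (A i) *ᵥ q k)) * (v j * (q t ⬝ᵥ (A j) *ᵥ q k)) * (2 / (μ k - μ t)) :=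
          sum3 _ _ _ _
      _ = ∑ t ∈ Finset.univ.filter (fun t => μ t ≠ μ k), 2 * (c t k)^2 / (μ k - μ t) := by
          refine Finset.sum_congr rfl fun t _ => ?_
          have e1 : ∑ j, v j * (q t ⬝ᵥ (A j) *ᵥ q k) = c t k := (hlin _ _).symm
          calc ∑ i, ∑ j, (v i * (q t ⬝ᵥ (A i) *ᵥ q k)) * (v j * (q t ⬝ᵥ (A j) *ᵥ q k)) * (2 / (μ k - μ t))
              = (∑ i, v i * (q t ⬝ᵥ (A i) *ᵥ q k)) * (∑ j, v j * (q t ⬝ᵥ (A j) *ᵥ q k)) * (2 / (μ k - μ t)) := by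
                rw [Finset.sum_mul_sum, Finset.sum_mul]
                exact Finset.sum_congr rfl fun i _ => by rw [Finset.sum_mul]
            _ = 2 * (c t k)^2 / (μ k - μ t) := by rw [e1]; ring
  -- total H
  have hHv : v ⬝ᵥ H *ᵥ v = ∑ k, (c k k)^2
      + ∑ k, ∑ t, (if μ t ≠ μ k then 2 * r k * (c t k)^2 / (μ k - μ t) else 0) := by
    have hsum : v ⬝ᵥ (∑ k, r k • Hk k) *ᵥ v = ∑ k, r k * (v ⬝ᵥ (Hk k) *ᵥ v) := by
      calc v ⬝ᵥ (∑ k, r k • Hk k) *ᵥ v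
          = ∑ i, ∑ j, ∑ k, r k * (v i * Hk k i j * v j) := by
            rw [quad]
            refine Finset.sum_congr rfl fun i _ => Finset.sum_congr rfl fun j _ => ?_
            rw [Matrix.sum_apply, Finset.mul_sum, Finset.sum_mul]
            refine Finset.sum_congr rfl fun k _ => ?_
            rw [Matrix.smul_apply, smul_eq_mul]
            ring
        _ = ∑ k, r k * (v ⬝ᵥ (Hk k) *ᵥ v) := by
            rw [sum3]
            refine Finset.sum_congr rfl fun k _ => ?_
            rw [quad, Finset.mul_sum]
            exact Finset.sum_congr rfl fun i _ => (Finset.mul_sum _ _ _).symm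
    rw [hH, add_mulVec, dotProduct_add, hJv, hsum]
    congr 1
    refine Finset.sum_congr rfl fun k _ => ?_
    rw [hHkv k, Finset.mul_sum, Finset.sum_filter]
    refine Finset.sum_congr rfl fun t _ => ?_
    split_ifs with h
    · ring
    · rfl
  -- pairing bound
  have pairing : ∑ k, ∑ t, (if μ t ≠ μ k then 2 * r k * (c t k)^2 / (μ k - μ t) else 0)
      ≤ ∑ k, ∑ t, (if μ t ≠ μ k then (c t k)^2 else 0) := by
    have key2 : ∀ k t, μ t ≠ μ k →
        2 * r k * (c t k)^2 / (μ k - μ t) + 2 * r t * (c k t)^2 / (μ t - μ k)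
          ≤ 2 * (c t k)^2 := by
      intro k t h
      have hmono : 0 ≤ (μ k - μ t) * (lamStar k - lamStar t) := by
        rcases lt_or_ge (μ t) (μ k) with hlt | hle
        · have htk : t ≤ k := le_of_not_gt fun hkt => absurd (hμ hkt.le) (not_le.2 hlt)
          exact mul_nonneg (by linarith) (by linarith [hlamStar htk])
        · have hlt' : μ k < μ t := lt_of_le_of_ne hle (fun he => h he.symm)
          have hkt : k ≤ t := le_of_not_gt fun htk => absurd (hμ htk.le) (not_le.2 hlt')
          nlinarith [hlamStar hkt]
      have := perpair (μ k) (μ t) (lamStar k) (lamStar t) ((c t k)^2) (sq_nonneg _)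
        (fun he => h he.symm) hmono
      rw [hr k, hr t, csymm t k]
      linarith
    have hswap : (∑ k, ∑ t, (if μ t ≠ μ k then 2 * r k * (c t k)^2 / (μ k - μ t) else 0))
        = ∑ k, ∑ t, (if μ t ≠ μ k then 2 * r t * (c k t)^2 / (μ t - μ k) else 0) := by
      rw [Finset.sum_comm]
      exact Finset.sum_congr rfl fun k _ => Finset.sum_congr rfl fun t _ =>
        if_congr ne_comm rfl rfl
    have h2T : 2 * (∑ k, ∑ t, (if μ t ≠ μ k then 2 * r k * (c t k)^2 / (μ k - μ t) else 0))
        = ∑ k, ∑ t, (if μ t ≠ μ k then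
            2 * r k * (c t k)^2 / (μ k - μ t) + 2 * r t * (c k t)^2 / (μ t - μ k) else 0) := by
      rw [two_mul]
      nth_rewrite 2 [hswap]
      rw [← Finset.sum_add_distrib]
      refine Finset.sum_congr rfl fun k _ => ?_
      rw [← Finset.sum_add_distrib]
      refine Finset.sum_congr rfl fun t _ => ?_
      split_ifs with h
      · rfl
      · exact add_zero 0
    have hbound : (∑ k, ∑ t, (if μ t ≠ μ k then
            2 * r k * (c t k)^2 / (μ k - μ t) + 2 * r t * (c k t)^2 / (μ t - μ k) else 0))
        ≤ ∑ k, ∑ t, (if μ t ≠ μ k then 2 * (c t k)^2 else 0) := by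
      refine Finset.sum_le_sum fun k _ => Finset.sum_le_sum fun t _ => ?_
      split_ifs with h
      · exact key2 k t h
      · exact le_refl 0
    have hfac : (∑ k, ∑ t, (if μ t ≠ μ k then 2 * (c t k)^2 else 0))
        = 2 * ∑ k, ∑ t, (if μ t ≠ μ k then (c t k)^2 else 0) := by
      simp only [Finset.mul_sum, mul_ite, mul_zero]
    linarith [h2T, hbound, hfac]
  -- diagonal absorption
  have diag : ∑ k, (c k k)^2 + ∑ k, ∑ t, (if μ t ≠ μ k then (c t k)^2 else 0)
      ≤ ∑ k, ∑ t, (c t k)^2 := by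
    rw [← Finset.sum_add_distrib]
    refine Finset.sum_le_sum fun k _ => ?_
    rw [← Finset.sum_filter]
    have hsub : Finset.univ.filter (fun t => μ t ≠ μ k) ⊆ Finset.univ.erase k := by
      intro t ht
      exact Finset.mem_erase.2 ⟨fun he => (Finset.mem_filter.1 ht).2 (by rw [he]),
        Finset.mem_univ t⟩
    calc (c k k)^2 + ∑ t ∈ Finset.univ.filter (fun t => μ t ≠ μ k), (c t k)^2
        ≤ (c k k)^2 + ∑ t ∈ Finset.univ.erase k, (c t k)^2 :=
          add_le_add_right (Finset.sum_le_sum_of_subset_of_nonneg hsub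
            (fun t _ _ => sq_nonneg _)) _
      _ = ∑ t, (c t k)^2 :=
          Finset.add_sum_erase Finset.univ (fun t => (c t k)^2) (Finset.mem_univ k)
  -- double Bessel
  have dbessel : ∑ k, ∑ t : Fin m, (c t k)^2 ≤ ∑ a, ∑ b, (M a b)^2 := by
    calc ∑ k, ∑ t : Fin m, (c t k)^2
        ≤ ∑ k, ((M *ᵥ q k) ⬝ᵥ (M *ᵥ q k)) := by
          refine Finset.sum_le_sum fun k _ => ?_
          simpa only [hc] using bessel q hq (M *ᵥ q k)
      _ = ∑ a, ∑ k, (q k ⬝ᵥ M a)^2 := by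
          rw [Finset.sum_comm]
          refine Finset.sum_congr rfl fun k _ => ?_
          have hdd : ∀ x : Fin n → ℝ, x ⬝ᵥ x = ∑ a, (x a)^2 := by
            intro x; simp [dotProduct, sq]
          rw [hdd]
          refine Finset.sum_congr rfl fun a _ => ?_
          rw [show (M *ᵥ q k) a = q k ⬝ᵥ M a from dotProduct_comm (M a) (q k)]
      _ ≤ ∑ a, (M a ⬝ᵥ M a) := Finset.sum_le_sum fun a _ => bessel q hq (M a)
      _ = ∑ a, ∑ b, (M a b)^2 := by simp [dotProduct, sq]
  rw [hBv, hHv]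
  linarith
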